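/- If the RNdS parameters (Λ, M, Q) (with Λ > 0, M > 0) are non-degenerate, with horizon radii r₋ < r₊, then there is exactly one r_c ∈ (r₋, r₊) with μ′(r_c) = 0, and it satisfies μ″(r_c) < 0 and μ(r_c) > 0. In other words, μ has a unique and non-degenerate maximum r_c in the exterior region (r₋, r₊). -/

import Mathlib

/-- The Reissner–Nordström–de Sitter metric coefficient
`μ(r) = 1 − 2M/r − Λr²/3 + Q²/r²`. -/
noncomputable def mu (Λ M Q r : ℝ) : ℝ := 1 - 2 * M / r - Λ * r ^ 2 / 3 + Q ^ 2 / r ^ 2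

/-- `ψ(r) = μ(r)/r²`. -/
noncomputable def psi (Λ M Q r : ℝ) : ℝ := mu Λ M Q r / r ^ 2

/-- Non-degeneracy of the RNdS parameters `(Λ, M, Q)`, witnessed by the horizon radii
`0 < rm < rp`. -/
def NondegAt (Λ M Q rm rp : ℝ) : Prop :=
  0 < rm ∧ rm < rp ∧
  mu Λ M Q rm = 0 ∧ mu Λ M Q rp = 0 ∧
  deriv (mu Λ M Q) rm ≠ 0 ∧ deriv (mu Λ M Q) rp ≠ 0 ∧
  (∀ r : ℝ, (rm < r ∧ r < rp) ∨ rp < r → mu Λ M Q r ≠ 0) ∧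
  ∃ rP ∈ Set.Ioo rm rp,
    deriv (psi Λ M Q) rP = 0 ∧
    deriv (deriv (psi Λ M Q)) rP ≠ 0 ∧
    ∀ r ∈ Set.Ioo rm rp, deriv (psi Λ M Q) r = 0 → r = rP

open Set

lemma mu_hasDerivAt (Λ M Q r : ℝ) (hr : r ≠ 0) :
    HasDerivAt (mu Λ M Q) ((2*M*r - 2*Λ*r^4/3 - 2*Q^2) / r^3) r := by
  have hinv : HasDerivAt (fun x : ℝ => x⁻¹) (-(r^2)⁻¹) r := hasDerivAt_inv hr
  have hsq : HasDerivAt (fun x : ℝ => x^2) (2*r) r := by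
    simpa using hasDerivAt_pow 2 r
  have hinvsq : HasDerivAt (fun x : ℝ => (x^2)⁻¹) (-(2*r) / (r^2)^2) r :=
    hsq.inv (pow_ne_zero 2 hr)
  have h : HasDerivAt (fun x : ℝ => 1 - 2*M*x⁻¹ - Λ*x^2/3 + Q^2*(x^2)⁻¹)
      (0 - 2*M*(-(r^2)⁻¹) - Λ*(2*r)/3 + Q^2*(-(2*r)/(r^2)^2)) r :=
    (((hasDerivAt_const r (1:ℝ)).sub (hinv.const_mul (2*M))).sub
      ((hsq.const_mul Λ).div_const 3)).add (hinvsq.const_mul (Q^2))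
  have heq : mu Λ M Q = fun x : ℝ => 1 - 2*M*x⁻¹ - Λ*x^2/3 + Q^2*(x^2)⁻¹ := by
    funext x; simp [mu, div_eq_mul_inv]
  rw [heq]
  convert h using 1
  field_simp
  ring

lemma mu_deriv (Λ M Q r : ℝ) (hr : r ≠ 0) :
    deriv (mu Λ M Q) r = (2*M*r - 2*Λ*r^4/3 - 2*Q^2) / r^3 :=
  (mu_hasDerivAt Λ M Q r hr).deriv

lemma mu_deriv2 (Λ M Q r : ℝ) (hr : r ≠ 0) :
    deriv (deriv (mu Λ M Q)) r =
      ((2*M - 8*Λ*r^3/3) * r^3 - (2*M*r - 2*Λ*r^4/3 - 2*Q^2) * (3*r^2)) / (r^3)^2 := by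
  have hev : deriv (mu Λ M Q) =ᶠ[nhds r] fun x => (2*M*x - 2*Λ*x^4/3 - 2*Q^2)/x^3 := by
    filter_upwards [eventually_ne_nhds hr] with x hx
    exact mu_deriv Λ M Q x hx
  rw [hev.deriv_eq]
  have hn : HasDerivAt (fun x : ℝ => 2*M*x - 2*Λ*x^4/3 - 2*Q^2) (2*M - 8*Λ*r^3/3) r := by
    have h1 : HasDerivAt (fun x : ℝ => x^4) (4*r^3) r := by
      simpa using hasDerivAt_pow 4 r
    have h2 := (((hasDerivAt_id r).const_mul (2*M)).sub
      ((h1.const_mul (2*Λ)).div_const 3)).sub (hasDerivAt_const r (2*Q^2))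
    rw [show (2*M - 8*Λ*r^3/3) = 2*M*1 - 2*Λ*(4*r^3)/3 - 0 by ring]
    exact h2
  have hd : HasDerivAt (fun x : ℝ => x^3) (3*r^2) r := by
    simpa using hasDerivAt_pow 3 r
  exact (hn.div hd (pow_ne_zero 3 hr)).deriv

lemma G_concave (Λ M Q x y : ℝ) (hΛ : 0 < Λ) (hx : 0 < x) (hxy : y ≠ x) :
    2*M*y - 2*Λ*y^4/3 - 2*Q^2 <
      (2*M*x - 2*Λ*x^4/3 - 2*Q^2) + (2*M - 8*Λ*x^3/3)*(y - x) := by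
  have h1 : y - x ≠ 0 := sub_ne_zero.mpr hxy
  have h2 : 0 < (y - x)^2 := lt_of_le_of_ne (sq_nonneg _) (Ne.symm (pow_ne_zero 2 h1))
  have h3 : (0:ℝ) < (x + y)^2 + 2*x^2 := by positivity
  have key : 0 < Λ * ((y - x)^2 * ((x + y)^2 + 2*x^2)) :=
    mul_pos hΛ (mul_pos h2 h3)
  nlinarith [key]

lemma mu_lt (Λ M Q a b : ℝ) (ha : 0 < a) (hab : a < b)
    (hd : ∀ y ∈ Ioo a b, deriv (mu Λ M Q) y < 0) : mu Λ M Q b < mu Λ M Q a := by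
  have hcont : ContinuousOn (mu Λ M Q) (Icc a b) := fun x hx =>
    ((mu_hasDerivAt Λ M Q x (ha.trans_le hx.1).ne').differentiableAt.continuousAt).continuousWithinAt
  have hs := strictAntiOn_of_deriv_neg (convex_Icc a b) hcont
    (fun x hx => hd x (by rwa [interior_Icc] at hx))
  exact hs (left_mem_Icc.mpr hab.le) (right_mem_Icc.mpr hab.le) hab

/-- For non-degenerate RNdS parameters, `μ` has a unique and non-degenerate maximum
`r_c` in the exterior region `(r₋, r₊)`: it is the unique critical point of `μ` there,
and it satisfies `μ″(r_c) < 0` and `μ(r_c) > 0`. -/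
theorem mu_unique_nondeg_max (Λ M Q rm rp : ℝ) (hΛ : 0 < Λ) (hM : 0 < M)
    (h : NondegAt Λ M Q rm rp) :
    ∃ rc ∈ Set.Ioo rm rp,
      deriv (mu Λ M Q) rc = 0 ∧
      deriv (deriv (mu Λ M Q)) rc < 0 ∧
      0 < mu Λ M Q rc ∧
      ∀ r ∈ Set.Ioo rm rp, deriv (mu Λ M Q) r = 0 → r = rc := by
  obtain ⟨hrm, hlt, hμm, hμp, h'm, h'p, hnz, -⟩ := h
  have hrp : 0 < rp := hrm.trans hlt
  have hcontAt : ∀ x : ℝ, 0 < x → ContinuousAt (mu Λ M Q) x := fun x hx =>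
    (mu_hasDerivAt Λ M Q x hx.ne').differentiableAt.continuousAt
  have hcontOn : ∀ a b : ℝ, 0 < a → ContinuousOn (mu Λ M Q) (Icc a b) := fun a b ha x hx =>
    (hcontAt x (ha.trans_le hx.1)).continuousWithinAt
  -- μ < 0 on (rp, ∞)
  have hnegR : ∀ y : ℝ, rp < y → mu Λ M Q y < 0 := by
    set R : ℝ := max (rp + 1) (Real.sqrt (3*(1+Q^2)/Λ) + 1) with hRdef
    have hR1 : rp + 1 ≤ R := le_max_left _ _
    have hR2 : Real.sqrt (3*(1+Q^2)/Λ) + 1 ≤ R := le_max_right _ _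
    have hRpos : 0 < R := by linarith
    have hRrp : rp < R := by linarith
    have hsqrt : Real.sqrt (3*(1+Q^2)/Λ) < R := by
      linarith [Real.sqrt_nonneg (3*(1+Q^2)/Λ)]
    have hsq : 3*(1+Q^2)/Λ < R^2 := (Real.sqrt_lt' hRpos).mp hsqrt
    have hΛR : 1 + Q^2 < Λ*R^2/3 := by
      rw [div_lt_iff₀ hΛ] at hsq
      linarith
    have hR1' : (1:ℝ) ≤ R := by linarith
    have hQR : Q^2/R^2 ≤ Q^2 := div_le_self (sq_nonneg Q) (by nlinarith)
    have h2MR : 0 < 2*M/R := by positivity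
    have hmuR : mu Λ M Q R < 0 := by
      rw [mu]
      linarith
    intro y hy
    rcases (hnz y (Or.inr hy)).lt_or_gt with hcase | hcase
    · exact hcase
    exfalso
    rcases le_total y R with hyR | hRy
    · obtain ⟨z, hz, hz0⟩ := intermediate_value_Icc' hyR (hcontOn y R (hrp.trans hy))
        ⟨hmuR.le, hcase.le⟩
      exact hnz z (Or.inr (hy.trans_le hz.1)) hz0
    · obtain ⟨z, hz, hz0⟩ := intermediate_value_Icc hRy (hcontOn R y hRpos)
        ⟨hmuR.le, hcase.le⟩
      exact hnz z (Or.inr (hRrp.trans_le hz.1)) hz0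
  -- μ > 0 on (rm, rp)
  have hpos : ∀ y ∈ Ioo rm rp, 0 < mu Λ M Q y := by
    intro y hy
    rcases (hnz y (Or.inl ⟨hy.1, hy.2⟩)).lt_or_gt with hneg | hp
    · exfalso
      have hallneg : ∀ z ∈ Ioo rm rp, mu Λ M Q z < 0 := by
        intro z hz
        rcases (hnz z (Or.inl ⟨hz.1, hz.2⟩)).lt_or_gt with h1 | h1
        · exact h1
        exfalso
        rcases le_total y z with hyz | hzy
        · obtain ⟨w, hw, hw0⟩ := intermediate_value_Icc hyz (hcontOn y z (hrm.trans hy.1))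
            ⟨hneg.le, h1.le⟩
          exact hnz w (Or.inl ⟨hy.1.trans_le hw.1, lt_of_le_of_lt hw.2 hz.2⟩) hw0
        · obtain ⟨w, hw, hw0⟩ := intermediate_value_Icc' hzy (hcontOn z y (hrm.trans hz.1))
            ⟨hneg.le, h1.le⟩
          exact hnz w (Or.inl ⟨hz.1.trans_le hw.1, lt_of_le_of_lt hw.2 hy.2⟩) hw0
      have hmax : IsLocalMax (mu Λ M Q) rp := by
        have hmem : Ioo rm (rp+1) ∈ nhds rp := Ioo_mem_nhds hlt (lt_add_one rp)
        filter_upwards [hmem] with z hz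
        rcases lt_trichotomy z rp with h1 | h1 | h1
        · rw [hμp]; exact (hallneg z ⟨hz.1, h1⟩).le
        · rw [h1]
        · rw [hμp]; exact (hnegR z h1).le
      exact h'p hmax.deriv_eq_zero
    · exact hp
  -- Rolle: critical point
  obtain ⟨rc, hrc, hdrc⟩ := exists_deriv_eq_zero hlt (hcontOn rm rp hrm) (hμm.trans hμp.symm)
  have hrc0 : 0 < rc := hrm.trans hrc.1
  have hGzero : ∀ r : ℝ, 0 < r → deriv (mu Λ M Q) r = 0 →
      2*M*r - 2*Λ*r^4/3 - 2*Q^2 = 0 := by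
    intro r hr0 hdr
    have hder := mu_deriv Λ M Q r hr0.ne'
    rw [hdr] at hder
    rcases div_eq_zero_iff.mp hder.symm with h1 | h1
    · exact h1
    · exact absurd h1 (pow_ne_zero 3 hr0.ne')
  have hGrc : 2*M*rc - 2*Λ*rc^4/3 - 2*Q^2 = 0 := hGzero rc hrc0 hdrc
  -- G' rc < 0
  have hG'rc : 2*M - 8*Λ*rc^3/3 < 0 := by
    by_contra hge
    push_neg at hge
    have hmd : ∀ y ∈ Ioo rm rc, deriv (mu Λ M Q) y < 0 := by
      intro y hy
      have hy0 : 0 < y := hrm.trans hy.1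
      have hcc := G_concave Λ M Q rc y hΛ hrc0 (ne_of_lt hy.2)
      have hprod : (2*M - 8*Λ*rc^3/3)*(y - rc) ≤ 0 :=
        mul_nonpos_of_nonneg_of_nonpos hge (by linarith [hy.2])
      have hGy : 2*M*y - 2*Λ*y^4/3 - 2*Q^2 < 0 := by linarith
      rw [mu_deriv Λ M Q y hy0.ne']
      exact div_neg_of_neg_of_pos hGy (by positivity)
    have hml := mu_lt Λ M Q rm rc hrm hrc.1 hmd
    rw [hμm] at hml
    linarith [hpos rc hrc]
  -- second derivative negative
  have hdd : deriv (deriv (mu Λ M Q)) rc < 0 := by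
    rw [mu_deriv2 Λ M Q rc hrc0.ne', hGrc]
    have hnum : (2*M - 8*Λ*rc^3/3) * rc^3 - 0 * (3*rc^2) < 0 := by
      have := mul_neg_of_neg_of_pos hG'rc (pow_pos hrc0 3)
      linarith
    exact div_neg_of_neg_of_pos hnum (by positivity)
  -- uniqueness
  have key : ∀ r1 r2 : ℝ, r1 ∈ Ioo rm rp → r2 ∈ Ioo rm rp → r1 < r2 →
      2*M*r1 - 2*Λ*r1^4/3 - 2*Q^2 = 0 → 2*M*r2 - 2*Λ*r2^4/3 - 2*Q^2 = 0 → False := by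
    intro r1 r2 h1 h2 h12 hg1 hg2
    have h10 : 0 < r1 := hrm.trans h1.1
    have hprod : 0 < (2*M - 8*Λ*r1^3/3)*(r2 - r1) := by
      have := G_concave Λ M Q r1 r2 hΛ h10 (ne_of_gt h12)
      linarith
    have hg' : 0 < 2*M - 8*Λ*r1^3/3 := by
      by_contra hle
      push_neg at hle
      nlinarith [hprod]
    have hmd : ∀ y ∈ Ioo rm r1, deriv (mu Λ M Q) y < 0 := by
      intro y hy
      have hy0 : 0 < y := hrm.trans hy.1
      have hcc := G_concave Λ M Q r1 y hΛ h10 (ne_of_lt hy.2)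
      have hprod2 : (2*M - 8*Λ*r1^3/3)*(y - r1) < 0 :=
        mul_neg_of_pos_of_neg hg' (by linarith [hy.2])
      have hGy : 2*M*y - 2*Λ*y^4/3 - 2*Q^2 < 0 := by linarith
      rw [mu_deriv Λ M Q y hy0.ne']
      exact div_neg_of_neg_of_pos hGy (by positivity)
    have hml := mu_lt Λ M Q rm r1 hrm h1.1 hmd
    rw [hμm] at hml
    linarith [hpos r1 h1]
  refine ⟨rc, hrc, hdrc, hdd, hpos rc hrc, ?_⟩
  intro r hr hdr
  by_contra hne
  have hr0 : 0 < r := hrm.trans hr.1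
  have hGr : 2*M*r - 2*Λ*r^4/3 - 2*Q^2 = 0 := hGzero r hr0 hdr
  rcases lt_or_gt_of_ne hne with hc | hc
  · exact key r rc hr hrc hc hGr hGrc
  · exact key rc r hrc hr hc hGrc hGr
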